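/- The quotient of the presented group K₂ = ⟨m, b ∣ [m, b²] = 1, [m², b] = 1⟩ by the normal closure of the subset {m², b²} is isomorphic to the free product (ℤ/2ℤ) * (ℤ/2ℤ). -/

import Mathlib

open scoped commutatorElement in
/-- The relators of `K₂ = ⟨m, b ∣ [m, b²] = 1, [m², b] = 1⟩`, with generators
`m = 0`, `b = 1`. -/
def relsK2 : Set (FreeGroup (Fin 2)) :=
  let m : FreeGroup (Fin 2) := FreeGroup.of 0
  let b : FreeGroup (Fin 2) := FreeGroup.of 1
  { ⁅m, b ^ 2⁆, ⁅m ^ 2, b⁆ }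

/-- `K₂ = ⟨m, b ∣ [m, b²] = 1, [m², b] = 1⟩`. -/
abbrev K2 := PresentedGroup relsK2

/-- Homomorphism from `Multiplicative (ZMod 2)` determined by an element of square one. -/
def hom2 {G : Type*} [Group G] (x : G) (hx : x ^ 2 = 1) : Multiplicative (ZMod 2) →* G where
  toFun a := x ^ (Multiplicative.toAdd a).val
  map_one' := by simp
  map_mul' a b := by
    show x ^ (Multiplicative.toAdd (a * b)).val =
      x ^ (Multiplicative.toAdd a).val * x ^ (Multiplicative.toAdd b).val
    have ha : Multiplicative.toAdd a = 0 ∨ Multiplicative.toAdd a = 1 := by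
      revert a; decide
    have hb : Multiplicative.toAdd b = 0 ∨ Multiplicative.toAdd b = 1 := by
      revert b; decide
    have hab : Multiplicative.toAdd (a * b) = Multiplicative.toAdd a + Multiplicative.toAdd b :=
      rfl
    have hxx : x * x = 1 := by rw [← pow_two]; exact hx
    rcases ha with ha | ha <;> rcases hb with hb | hb <;>
      rw [hab, ha, hb] <;>
      simp [show ((0 : ZMod 2) + 0).val = 0 from rfl,
        show ((0 : ZMod 2) + 1).val = 1 from rfl, show ((1 : ZMod 2) + 0).val = 1 from rfl,
        show ((1 : ZMod 2) + 1).val = 0 from rfl, show (0 : ZMod 2).val = 0 from rfl,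
        show (1 : ZMod 2).val = 1 from rfl, hxx]

@[simp] theorem hom2_gen {G : Type*} [Group G] (x : G) (hx : x ^ 2 = 1) :
    hom2 x hx (Multiplicative.ofAdd 1) = x := by
  show x ^ (1 : ZMod 2).val = x
  simp [show (1 : ZMod 2).val = 1 from rfl]

/-- The quotient of `K₂` by the normal closure of `{m², b²}` is
isomorphic to the free product `(ℤ/2ℤ) * (ℤ/2ℤ)`. -/
theorem K2_quotient_iso_free_product :
    Nonempty
      ((K2 ⧸ Subgroup.normalClosure
          {(PresentedGroup.of 0 : K2) ^ 2, (PresentedGroup.of 1 : K2) ^ 2}) ≃*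
        Monoid.Coprod (Multiplicative (ZMod 2)) (Multiplicative (ZMod 2))) := by
  set S : Set K2 := {(PresentedGroup.of 0 : K2) ^ 2, (PresentedGroup.of 1 : K2) ^ 2} with hS
  set C := Monoid.Coprod (Multiplicative (ZMod 2)) (Multiplicative (ZMod 2))
  set g : Multiplicative (ZMod 2) := Multiplicative.ofAdd 1
  have hg2 : g ^ 2 = 1 := by decide
  -- forward map
  set f : Fin 2 → C := ![Monoid.Coprod.inl g, Monoid.Coprod.inr g] with hf
  have hinl : (Monoid.Coprod.inl g : C) ^ 2 = 1 := by rw [← map_pow, hg2, map_one]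
  have hinr : (Monoid.Coprod.inr g : C) ^ 2 = 1 := by rw [← map_pow, hg2, map_one]
  have hrels : ∀ r ∈ relsK2, FreeGroup.lift f r = 1 := by
    intro r hr
    rcases hr with hr | hr <;> subst hr <;>
      simp [commutatorElement_def, map_pow, f, hinl, hinr]
  set φ' : K2 →* C := PresentedGroup.toGroup hrels with hφ'
  have hφ'S : ∀ x ∈ Subgroup.normalClosure S, φ' x = 1 := by
    have hle : Subgroup.normalClosure S ≤ φ'.ker := by
      apply Subgroup.normalClosure_le_normal
      rintro x (hx | hx) <;> subst hx <;>
        simp [MonoidHom.mem_ker, hφ', map_pow, PresentedGroup.toGroup.of, f, hinl, hinr]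
    exact fun x hx => hle hx
  set φ : (K2 ⧸ Subgroup.normalClosure S) →* C :=
    QuotientGroup.lift (Subgroup.normalClosure S) φ' hφ'S with hφ
  -- reverse map
  have hmq : ((PresentedGroup.of 0 : K2) : K2 ⧸ Subgroup.normalClosure S) ^ 2 = 1 := by
    rw [← QuotientGroup.mk_pow, QuotientGroup.eq_one_iff]
    exact Subgroup.subset_normalClosure (by left; rfl)
  have hbq : ((PresentedGroup.of 1 : K2) : K2 ⧸ Subgroup.normalClosure S) ^ 2 = 1 := by
    rw [← QuotientGroup.mk_pow, QuotientGroup.eq_one_iff]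
    exact Subgroup.subset_normalClosure (by right; rfl)
  set ψ : C →* (K2 ⧸ Subgroup.normalClosure S) :=
    Monoid.Coprod.lift (hom2 _ hmq) (hom2 _ hbq) with hψ
  refine ⟨MonoidHom.toMulEquiv φ ψ ?_ ?_⟩
  · -- ψ ∘ φ = id
    apply QuotientGroup.monoidHom_ext
    apply PresentedGroup.ext
    intro x
    fin_cases x <;>
      simp [hφ, hψ, hφ', f, PresentedGroup.toGroup.of, g]
  · -- φ ∘ ψ = id
    apply Monoid.Coprod.hom_ext <;>
    · apply MonoidHom.ext
      intro x
      have hx : x = 1 ∨ x = g := by revert x; decide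
      rcases hx with hx | hx <;> subst hx <;>
        simp [hφ, hψ, hφ', f, PresentedGroup.toGroup.of, g,
          show ((PresentedGroup.of 0 : K2) : K2 ⧸ Subgroup.normalClosure S) =
            QuotientGroup.mk (PresentedGroup.of 0) from rfl]
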